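/- Let ι be a finite type and let F : (ι → ℝ) → (ι → ℝ) be a Lipschitz-continuous vector field such that for every x in the nonnegative orthant (x i ≥ 0 for all i) and every index i with x i = 0, one has F x i ≥ 0. Let x : ℝ → (ι → ℝ) be a solution, i.e., for every t ≥ 0 and every i ∈ ι, the function t ↦ x t i has derivative (F (x t)) i at t. If x 0 i ≥ 0 for all i, then x t i ≥ 0 for all t ≥ 0 and all i ∈ ι. -/
import Mathlib

open Set Filter Real
open scoped Topology NNReal

/-- Forward invariance of the nonnegative orthant for a Lipschitz vector field
`F` that points inward on the boundary faces (`F x i ≥ 0` whenever `x ≥ 0` and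
`x i = 0`): every solution starting in the orthant stays in the orthant. -/
theorem ode_nonneg_invariance
    (ι : Type*) [Fintype ι]
    (F : (ι → ℝ) → (ι → ℝ)) (c : NNReal) (hFlip : LipschitzWith c F)
    (hF : ∀ x : ι → ℝ, (∀ i, 0 ≤ x i) → ∀ i, x i = 0 → 0 ≤ F x i)
    (x : ℝ → ι → ℝ)
    (hx : ∀ t ≥ (0 : ℝ), ∀ i, HasDerivAt (fun s => x s i) (F (x t) i) t)
    (hx0 : ∀ i, 0 ≤ x 0 i) :
    ∀ t ≥ (0 : ℝ), ∀ i, 0 ≤ x t i := by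
  rcases isEmpty_or_nonempty ι with h | hne
  · intro t ht i; exact isEmptyElim i
  set n : ℝ := (Fintype.card ι : ℝ) with hn
  have hnpos : 0 < n := by
    have h0 : 0 < Fintype.card ι := Fintype.card_pos
    show (0:ℝ) < (Fintype.card ι : ℝ)
    exact_mod_cast h0
  set f : ℝ → ℝ := fun t => ∑ j, max (-(x t j)) 0 with hfdef
  have hfnonneg : ∀ t, 0 ≤ f t := fun t =>
    Finset.sum_nonneg fun j _ => le_max_right _ _
  have hterm : ∀ t j, max (-(x t j)) 0 ≤ f t := fun t j =>
    Finset.single_le_sum (f := fun j => max (-(x t j)) 0)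
      (fun j _ => le_max_right _ _) (Finset.mem_univ j)
  -- Key estimate : on the boundary-ish region the vector field is bounded below.
  have key : ∀ t, 0 ≤ t → ∀ i, x t i ≤ 0 → -(c * f t) ≤ F (x t) i := by
    intro t ht i hxi
    set y : ι → ℝ := fun j => max (x t j) 0 with hy
    have hy0 : ∀ j, 0 ≤ y j := fun j => le_max_right _ _
    have hyi : y i = 0 := max_eq_right hxi
    have hFy : 0 ≤ F y i := hF y hy0 i hyi
    have hdist : dist (x t) y ≤ f t := by
      rw [dist_pi_le_iff (hfnonneg t)]
      intro j
      have hj : dist (x t j) (y j) ≤ max (-(x t j)) 0 := by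
        rcases le_total 0 (x t j) with hj0 | hj0
        · have : y j = x t j := max_eq_left hj0
          simp [this, dist_self, le_max_right]
        · have hyj : y j = 0 := max_eq_right hj0
          rw [hyj, Real.dist_eq, sub_zero, abs_of_nonpos hj0]
          exact le_max_left _ _
      exact hj.trans (hterm t j)
    have h1 : dist (F (x t)) (F y) ≤ c * f t :=
      (hFlip.dist_le_mul _ _).trans (by
        exact mul_le_mul_of_nonneg_left hdist c.2)
    have h2 : dist (F (x t) i) (F y i) ≤ c * f t :=
      (dist_le_pi_dist _ _ i).trans h1
    rw [Real.dist_eq] at h2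
    have := (abs_le.1 h2).1
    linarith
  -- Grönwall on [0, T]
  have main : ∀ T : ℝ, 0 ≤ T → ∀ t ∈ Icc (0 : ℝ) T, f t ≤ 0 := by
    intro T hT
    have hcont : ContinuousOn f (Icc (0 : ℝ) T) := by
      intro t ht
      apply ContinuousAt.continuousWithinAt
      exact tendsto_finset_sum _ fun j _ =>
        ((hx t ht.1 j).continuousAt.neg).max continuousAt_const
    have hf' : ∀ t ∈ Ico (0 : ℝ) T, ∀ r, n * c * f t < r →
        ∃ᶠ z in 𝓝[>] t, (z - t)⁻¹ * (f z - f t) < r := by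
      intro t ht r hr
      have ht0 : 0 ≤ t := ht.1
      have hKnn : 0 ≤ n * c * f t := by positivity
      have hr0 : 0 < r := lt_of_le_of_lt hKnn hr
      set ρ : ℝ := r / n with hρdef
      have hρ0 : 0 < ρ := div_pos hr0 hnpos
      have hcρ : (c : ℝ) * f t < ρ := by
        rw [hρdef, lt_div_iff₀ hnpos]
        calc (c : ℝ) * f t * n = n * c * f t := by ring
        _ < r := hr
      have Ev : ∀ j, ∀ᶠ z in 𝓝[>] t,
          (z - t)⁻¹ * (max (-(x z j)) 0 - max (-(x t j)) 0) < ρ := by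
        intro j
        rcases lt_or_ge 0 (x t j) with hpos | hle
        · have hc : ContinuousAt (fun s => x s j) t := (hx t ht0 j).continuousAt
          have hev : ∀ᶠ z in 𝓝 t, 0 < x z j := hc (Ioi_mem_nhds hpos)
          filter_upwards [nhdsWithin_le_nhds hev] with z hz
          have h1 : max (-(x z j)) 0 = 0 := max_eq_right (by linarith)
          have h2 : max (-(x t j)) 0 = 0 := max_eq_right (by linarith)
          rw [h1, h2, sub_zero, mul_zero]
          exact hρ0
        · have hFlb : -(c * f t) ≤ F (x t) j := key t ht0 j hle
          have hder := hx t ht0 j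
          have hslope : Tendsto (fun z => (z - t)⁻¹ * (x z j - x t j)) (𝓝[>] t)
              (𝓝 (F (x t) j)) := by
            have h := (hasDerivAt_iff_tendsto_slope.1 hder).mono_left
              (nhdsWithin_mono t fun z hz => ne_of_gt hz)
            refine h.congr fun z => ?_
            simp [slope_def_field, div_eq_inv_mul]
          have hneg : Tendsto (fun z => (z - t)⁻¹ * (x t j - x z j)) (𝓝[>] t)
              (𝓝 (-(F (x t) j))) := by
            have := hslope.neg
            refine this.congr fun z => ?_
            ring
          have hlt : -(F (x t) j) < ρ := lt_of_le_of_lt (by linarith) hcρ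
          have hev1 : ∀ᶠ z in 𝓝[>] t, (z - t)⁻¹ * (x t j - x z j) < ρ :=
            hneg.eventually_lt_const hlt
          filter_upwards [hev1, self_mem_nhdsWithin] with z hz1 hz2
          have hzt : 0 < z - t := sub_pos.2 hz2
          have hgt : max (-(x t j)) 0 = -(x t j) := max_eq_left (by linarith)
          have hdiff : max (-(x z j)) 0 - max (-(x t j)) 0
              ≤ max (x t j - x z j) 0 := by
            rw [hgt]
            rcases le_total (-(x z j)) 0 with h | h
            · rw [max_eq_right h]
              have : 0 - -(x t j) = x t j := by ring
              rw [this]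
              exact hle.trans (le_max_right _ _)
            · rw [max_eq_left h]
              have : -(x z j) - -(x t j) = x t j - x z j := by ring
              rw [this]
              exact le_max_left _ _
          calc (z - t)⁻¹ * (max (-(x z j)) 0 - max (-(x t j)) 0)
              ≤ (z - t)⁻¹ * max (x t j - x z j) 0 := by
                exact mul_le_mul_of_nonneg_left hdiff (inv_nonneg.2 hzt.le)
            _ = max ((z - t)⁻¹ * (x t j - x z j)) ((z - t)⁻¹ * 0) := by
                rw [mul_max_of_nonneg _ _ (inv_nonneg.2 hzt.le)]
            _ < ρ := by
                rw [mul_zero]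
                exact max_lt hz1 hρ0
      apply Filter.Eventually.frequently
      have hall : ∀ᶠ z in 𝓝[>] t, ∀ j,
          (z - t)⁻¹ * (max (-(x z j)) 0 - max (-(x t j)) 0) < ρ :=
        eventually_all.2 Ev
      filter_upwards [hall] with z hz
      have hexp : (z - t)⁻¹ * (f z - f t)
          = ∑ j, (z - t)⁻¹ * (max (-(x z j)) 0 - max (-(x t j)) 0) := by
        rw [hfdef]
        rw [← Finset.sum_sub_distrib, Finset.mul_sum]
      rw [hexp]
      calc (∑ j, (z - t)⁻¹ * (max (-(x z j)) 0 - max (-(x t j)) 0))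
          < ∑ _j : ι, ρ := Finset.sum_lt_sum_of_nonempty Finset.univ_nonempty
            fun j _ => hz j
        _ = n * ρ := by rw [Finset.sum_const, nsmul_eq_mul]; rfl
        _ = r := by rw [hρdef, mul_div_cancel₀ _ (ne_of_gt hnpos)]
    have hf0 : f 0 ≤ 0 := by
      have : f 0 = 0 := Finset.sum_eq_zero fun j _ => max_eq_right (by
        have := hx0 j; linarith)
      exact le_of_eq this
    have bound : ∀ t ∈ Ico (0 : ℝ) T, n * c * f t ≤ n * c * f t + 0 := by
      intro t _; simp
    have := le_gronwallBound_of_liminf_deriv_right_le hcont hf' hf0 bound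
    intro t htT
    have h := this t htT
    rwa [gronwallBound_ε0_δ0] at h
  intro t ht i
  have hft : f t ≤ 0 := main t ht t ⟨ht, le_refl t⟩
  have := (hterm t i).trans hft
  have h2 : -(x t i) ≤ 0 := (le_max_left _ _).trans this
  linarith
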